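/- A function f: Dⁿ → ℝ is α-bisubmodular if and only if its Lovász extension f^L: [-α,1]ⁿ → ℝ is convex. -/

import Mathlib

open Finset

/-- The three-element domain `D = {-α, 0, 1}`, abstractly. -/
inductive D3 : Type
  | neg : D3
  | zero : D3
  | one : D3
deriving DecidableEq

instance : Fintype D3 :=
  ⟨{D3.neg, D3.zero, D3.one}, by rintro (_ | _ | _) <;> simp⟩

namespace D3

/-- The embedding of `D3` into `ℝ` sending `neg ↦ -α`, `zero ↦ 0`, `one ↦ 1`. -/
def emb (α : ℝ) : D3 → ℝ
  | neg => -α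
  | zero => 0
  | one => 1

/-- The partial order `0 ≺ 1`, `0 ≺ -α`, with `1` and `-α` incomparable. -/
instance : PartialOrder D3 where
  le x y := x = y ∨ x = zero
  le_refl x := Or.inl rfl
  le_trans x y z hxy hyz := by
    rcases hxy with rfl | rfl
    · exact hyz
    · exact Or.inr rfl
  le_antisymm x y hxy hyx := by
    rcases hxy with rfl | rfl
    · rfl
    · rcases hyx with rfl | rfl <;> rfl

/-- `∧₀` : `1 ∧₀ (-α) = (-α) ∧₀ 1 = 0`, and min w.r.t. `≺` otherwise. -/
def meet0 (x y : D3) : D3 := if x = y then x else zero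

/-- `∨₀` : `1 ∨₀ (-α) = (-α) ∨₀ 1 = 0`, and max w.r.t. `≺` otherwise. -/
def join0 (x y : D3) : D3 :=
  if x = y then x else if x = zero then y else if y = zero then x else zero

/-- `∨₁` : `1 ∨₁ (-α) = (-α) ∨₁ 1 = 1`, and max w.r.t. `≺` otherwise. -/
def join1 (x y : D3) : D3 :=
  if x = y then x else if x = zero then y else if y = zero then x else one

end D3

/-- Componentwise `∧₀` on `Dⁿ`. -/
def vmeet0 {n : ℕ} (a b : Fin n → D3) : Fin n → D3 := fun i => D3.meet0 (a i) (b i)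

/-- Componentwise `∨₀` on `Dⁿ`. -/
def vjoin0 {n : ℕ} (a b : Fin n → D3) : Fin n → D3 := fun i => D3.join0 (a i) (b i)

/-- Componentwise `∨₁` on `Dⁿ`. -/
def vjoin1 {n : ℕ} (a b : Fin n → D3) : Fin n → D3 := fun i => D3.join1 (a i) (b i)

/-- `lam` is a probability distribution on `Dⁿ`. -/
def IsDist (n : ℕ) (lam : (Fin n → D3) → ℝ) : Prop :=
  (∀ a, 0 ≤ lam a ∧ lam a ≤ 1) ∧ ∑ a : Fin n → D3, lam a = 1

/-- `lam` has marginal vector `x`, i.e. `Σ_a lam(a)·a = x` in `ℝⁿ`. -/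
def HasMarginal (α : ℝ) (n : ℕ) (lam : (Fin n → D3) → ℝ) (x : Fin n → ℝ) : Prop :=
  ∀ i, ∑ a : Fin n → D3, lam a * D3.emb α (a i) = x i

/-- The support of `lam` forms a chain w.r.t. the componentwise order on `Dⁿ`. -/
def ChainSupp (n : ℕ) (lam : (Fin n → D3) → ℝ) : Prop :=
  ∀ a b : Fin n → D3, lam a ≠ 0 → lam b ≠ 0 → a ≤ b ∨ b ≤ a

/-- The box `[-α,1]ⁿ`. -/
def Box (α : ℝ) (n : ℕ) : Set (Fin n → ℝ) := {x | ∀ i, x i ∈ Set.Icc (-α) 1}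

/-- `f : Dⁿ → ℝ` is α-bisubmodular. -/
def AlphaBisub (α : ℝ) (n : ℕ) (f : (Fin n → D3) → ℝ) : Prop :=
  ∀ a b : Fin n → D3,
    f (vmeet0 a b) + α * f (vjoin0 a b) + (1 - α) * f (vjoin1 a b) ≤ f a + f b

/-- Number of zero coordinates. -/
def zc {n : ℕ} (c : Fin n → D3) : ℕ := (Finset.univ.filter fun i => c i = D3.zero).card

/-- The convex closure `f⁻(x)`. -/
noncomputable def cClos (α : ℝ) (n : ℕ) (f : (Fin n → D3) → ℝ) (x : Fin n → ℝ) : ℝ :=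
  sInf {y | ∃ lam, IsDist n lam ∧ HasMarginal α n lam x ∧ y = ∑ a : Fin n → D3, lam a * f a}

namespace Stmt11Aux

instance : DecidableRel ((· ≤ ·) : D3 → D3 → Prop) :=
  fun a b => decidable_of_iff (a = b ∨ a = D3.zero) Iff.rfl

lemma D3.le_iff (x y : D3) : x ≤ y ↔ (x = y ∨ x = D3.zero) := Iff.rfl

lemma vle_iff {n : ℕ} (a b : Fin n → D3) : a ≤ b ↔ ∀ i, a i = b i ∨ a i = D3.zero := Iff.rfl

lemma emb_key (α : ℝ) (u v : D3) :
    D3.emb α (D3.meet0 u v) + α * D3.emb α (D3.join0 u v) + (1 - α) * D3.emb α (D3.join1 u v)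
      = D3.emb α u + D3.emb α v := by
  cases u <;> cases v <;> simp [D3.emb, D3.meet0, D3.join0, D3.join1] <;> ring

lemma meet0_le_join0 {n : ℕ} (a b : Fin n → D3) : vmeet0 a b ≤ vjoin0 a b := by
  intro i
  show D3.meet0 (a i) (b i) ≤ D3.join0 (a i) (b i)
  cases a i <;> cases b i <;> decide

lemma join0_le_join1 {n : ℕ} (a b : Fin n → D3) : vjoin0 a b ≤ vjoin1 a b := by
  intro i
  show D3.join0 (a i) (b i) ≤ D3.join1 (a i) (b i)
  cases a i <;> cases b i <;> decide

lemma sum_ite_collapse {n : ℕ} (c0 : Fin n → D3) (h : (Fin n → D3) → ℝ) :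
    ∑ c : Fin n → D3, (if c = c0 then (1:ℝ) else 0) * h c = h c0 := by
  simp [ite_mul]


open Classical in
/-- weight of a predicate under `lam` -/
noncomputable def mw {n : ℕ} (lam : (Fin n → D3) → ℝ) (P : (Fin n → D3) → Prop) : ℝ :=
  ∑ a : Fin n → D3, if P a then lam a else 0

/-- upward heredity on the support -/
def Hered {n : ℕ} (lam : (Fin n → D3) → ℝ) (P : (Fin n → D3) → Prop) : Prop :=
  ∀ a b : Fin n → D3, lam a ≠ 0 → lam b ≠ 0 → a ≤ b → P a → P b

section mwlem
variable {n : ℕ} {lam : (Fin n → D3) → ℝ} {P Q : (Fin n → D3) → Prop}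

lemma mw_nonneg (hnn : ∀ a, 0 ≤ lam a) : 0 ≤ mw lam P := by
  classical
  refine Finset.sum_nonneg fun a _ => ?_
  split
  · exact hnn a
  · exact le_rfl

lemma mw_pos_elim (h : mw lam P ≠ 0) : ∃ a, lam a ≠ 0 ∧ P a := by
  classical
  by_contra hc
  push_neg at hc
  apply h
  refine Finset.sum_eq_zero fun a _ => ?_
  by_cases hP : P a
  · by_cases hl : lam a = 0
    · simp [hP, hl]
    · exact absurd hP (by simpa using hc a hl)
  · simp [hP]

lemma mw_mono_supp (hnn : ∀ a, 0 ≤ lam a) (h : ∀ a, lam a ≠ 0 → P a → Q a) :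
    mw lam P ≤ mw lam Q := by
  classical
  refine Finset.sum_le_sum fun a _ => ?_
  by_cases hP : P a
  · by_cases hl : lam a = 0
    · simp only [hl]; split <;> split <;> simp
    · simp [hP, h a hl hP]
  · simp only [hP, if_false]
    split
    · exact hnn a
    · exact le_rfl

lemma mw_and_left (h : ∀ a, lam a ≠ 0 → P a → Q a) :
    mw lam (fun a => P a ∧ Q a) = mw lam P := by
  classical
  refine Finset.sum_congr rfl fun a _ => ?_
  by_cases hP : P a
  · by_cases hl : lam a = 0
    · split <;> simp [hl]
    · simp [hP, h a hl hP]
  · simp [hP]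

lemma mw_min (hnn : ∀ a, 0 ≤ lam a) (hchain : ChainSupp n lam)
    (hP : Hered lam P) (hQ : Hered lam Q) :
    mw lam (fun a => P a ∧ Q a) = min (mw lam P) (mw lam Q) := by
  classical
  have dich : (∀ a, lam a ≠ 0 → P a → Q a) ∨ (∀ a, lam a ≠ 0 → Q a → P a) := by
    by_contra hc
    push_neg at hc
    obtain ⟨⟨a, ha, hPa, hQa⟩, ⟨b, hb, hQb, hPb⟩⟩ := hc
    rcases hchain a b ha hb with h | h
    · exact hPb (hP a b ha hb h hPa)
    · exact hQa (hQ b a hb ha h hQb)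
  rcases dich with h | h
  · rw [mw_and_left h, min_eq_left (mw_mono_supp hnn h)]
  · have : mw lam (fun a => P a ∧ Q a) = mw lam (fun a => Q a ∧ P a) := by
      refine Finset.sum_congr rfl fun a _ => ?_
      simp [and_comm]
    rw [this, mw_and_left h, min_eq_right (mw_mono_supp hnn h)]

lemma hered_forall (s : Finset (Fin n)) (Pi : Fin n → (Fin n → D3) → Prop)
    (h : ∀ i ∈ s, Hered lam (Pi i)) : Hered lam (fun a => ∀ i ∈ s, Pi i a) :=
  fun a b ha hb hle hP i hi => h i hi a b ha hb hle (hP i hi)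

lemma mw_inf (hnn : ∀ a, 0 ≤ lam a) (hchain : ChainSupp n lam)
    (s : Finset (Fin n)) (hs : s.Nonempty) (Pi : Fin n → (Fin n → D3) → Prop) :
    (∀ i ∈ s, Hered lam (Pi i)) →
    mw lam (fun a => ∀ i ∈ s, Pi i a) = s.inf' hs (fun i => mw lam (Pi i)) := by
  classical
  induction hs using Finset.Nonempty.cons_induction with
  | singleton i =>
    intro hP
    have : (fun a => ∀ j ∈ ({i} : Finset (Fin n)), Pi j a) = Pi i := by
      funext a; simp
    rw [this, Finset.inf'_singleton]
  | cons i s hi hs ih =>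
    intro hP
    have h1 : (fun a => ∀ j ∈ Finset.cons i s hi, Pi j a)
        = fun a => Pi i a ∧ ∀ j ∈ s, Pi j a := by
      funext a; simp [Finset.forall_mem_cons]
    rw [h1, mw_min hnn hchain (hP i (Finset.mem_cons_self i s))
        (hered_forall s Pi fun j hj => hP j (Finset.mem_cons_of_mem hj)),
      ih fun j hj => hP j (Finset.mem_cons_of_mem hj), Finset.inf'_cons]

end mwlem

section unique
variable {n : ℕ} (α : ℝ)

/-- number of nonzero coordinates -/
def nz {n : ℕ} (a : Fin n → D3) : ℕ := (Finset.univ.filter fun i => a i ≠ D3.zero).card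

lemma nz_lt_of_lt {a b : Fin n → D3} (h : a < b) : nz a < nz b := by
  classical
  have hsub : (Finset.univ.filter fun i => a i ≠ D3.zero) ⊆
      (Finset.univ.filter fun i => b i ≠ D3.zero) := by
    intro i hi
    simp only [Finset.mem_filter, Finset.mem_univ, true_and] at hi ⊢
    rcases h.le i with he | h0
    · rw [← he]; exact hi
    · exact absurd h0 hi
  have hne : a ≠ b := h.ne
  have : ∃ i, a i ≠ b i := by
    by_contra hc; push_neg at hc; exact hne (funext hc)
  obtain ⟨i, hi⟩ := this
  have h0 : a i = D3.zero := (h.le i).resolve_left hi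
  have hb0 : b i ≠ D3.zero := fun hb => hi (h0.trans hb.symm)
  apply Finset.card_lt_card
  rw [Finset.ssubset_iff_of_subset hsub]
  exact ⟨i, by simp [hb0], by simp [h0]⟩

theorem chain_dist_unique (hα : 0 < α) (x : Fin n → ℝ)
    (lam mu : (Fin n → D3) → ℝ)
    (hl1 : IsDist n lam) (hl2 : HasMarginal α n lam x) (hl3 : ChainSupp n lam)
    (hm1 : IsDist n mu) (hm2 : HasMarginal α n mu x) (hm3 : ChainSupp n mu) :
    lam = mu := by
  classical
  have hlnn : ∀ a, 0 ≤ lam a := fun a => (hl1.1 a).1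
  have hmnn : ∀ a, 0 ≤ mu a := fun a => (hm1.1 a).1
  -- coordinate weights are determined
  have hsplit : ∀ (nu : (Fin n → D3) → ℝ), HasMarginal α n nu x → ∀ i,
      mw nu (fun a => a i = D3.one) - α * mw nu (fun a => a i = D3.neg) = x i := by
    intro nu hmarg i
    rw [← hmarg i, mw, mw, Finset.mul_sum, ← Finset.sum_sub_distrib]
    refine Finset.sum_congr rfl fun a _ => ?_
    cases h : a i <;> simp [h, D3.emb] <;> ring
  have hdisj : ∀ (nu : (Fin n → D3) → ℝ), ChainSupp n nu → ∀ i,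
      mw nu (fun a => a i = D3.one) = 0 ∨ mw nu (fun a => a i = D3.neg) = 0 := by
    intro nu hchain i
    by_contra hc
    push_neg at hc
    obtain ⟨a, ha, hai⟩ := mw_pos_elim hc.1
    obtain ⟨b, hb, hbi⟩ := mw_pos_elim hc.2
    rcases hchain a b ha hb with h | h
    · rcases h i with he | he <;> simp_all
    · rcases h i with he | he <;> simp_all
  have key : ∀ i, mw lam (fun a => a i = D3.one) = mw mu (fun a => a i = D3.one) ∧
      mw lam (fun a => a i = D3.neg) = mw mu (fun a => a i = D3.neg) := by
    intro i
    have e1 := hsplit lam hl2 i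
    have e2 := hsplit mu hm2 i
    have n1 : 0 ≤ mw lam (fun a => a i = D3.one) := mw_nonneg hlnn
    have n2 : 0 ≤ mw lam (fun a => a i = D3.neg) := mw_nonneg hlnn
    have n3 : 0 ≤ mw mu (fun a => a i = D3.one) := mw_nonneg hmnn
    have n4 : 0 ≤ mw mu (fun a => a i = D3.neg) := mw_nonneg hmnn
    rcases hdisj lam hl3 i with h | h <;> rcases hdisj mu hm3 i with h' | h' <;>
      constructor <;> nlinarith
  -- the upward sums agree
  have hM : ∀ a : Fin n → D3, mw lam (fun b => a ≤ b) = mw mu (fun b => a ≤ b) := by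
    intro a
    by_cases hs : (Finset.univ.filter fun i => a i ≠ D3.zero).Nonempty
    · set s := Finset.univ.filter fun i => a i ≠ D3.zero with hsdef
      have hiff : ∀ b, a ≤ b ↔ ∀ i ∈ s, b i = a i := by
        intro b
        constructor
        · intro h i hi
          simp only [hsdef, Finset.mem_filter, Finset.mem_univ, true_and] at hi
          exact ((h i).resolve_right hi).symm
        · intro h i
          by_cases h0 : a i = D3.zero
          · exact Or.inr h0
          · exact Or.inl (h i (by simp [hsdef, h0])).symm
      have hre : (fun b => a ≤ b) = fun b => ∀ i ∈ s, b i = a i :=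
        funext fun b => propext (hiff b)
      have hhered : ∀ (nu : (Fin n → D3) → ℝ), ChainSupp n nu → ∀ i ∈ s,
          Hered nu (fun b => b i = a i) := by
        intro nu _ i hi b b' hb hb' hle hbi
        simp only [hsdef, Finset.mem_filter, Finset.mem_univ, true_and] at hi
        rcases hle i with he | he
        · rw [← he]; exact hbi
        · exact absurd (he ▸ hbi : D3.zero = a i) (fun h => hi h.symm)
      rw [hre, mw_inf hlnn hl3 s hs _ (hhered lam hl3),
        mw_inf hmnn hm3 s hs _ (hhered mu hm3)]
      refine Finset.inf'_congr hs rfl fun i hi => ?_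
      have hi' : a i ≠ D3.zero := by
        simpa [hsdef] using hi
      cases h : a i with
      | zero => exact absurd h hi'
      | one => simpa [h] using (key i).1
      | neg => simpa [h] using (key i).2
    · have hz : ∀ i, a i = D3.zero := by
        intro i
        by_contra h
        exact hs ⟨i, by simp [h]⟩
      have hle : ∀ b, a ≤ b := fun b i => Or.inr (hz i)
      have e1 : mw lam (fun b => a ≤ b) = 1 := by
        rw [← hl1.2]; exact Finset.sum_congr rfl fun b _ => if_pos (hle b)
      have e2 : mw mu (fun b => a ≤ b) = 1 := by
        rw [← hm1.2]; exact Finset.sum_congr rfl fun b _ => if_pos (hle b)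
      rw [e1, e2]
  -- downward induction
  have hsplit2 : ∀ (nu : (Fin n → D3) → ℝ) (a : Fin n → D3),
      mw nu (fun b => a ≤ b) = nu a + ∑ b : Fin n → D3, if a < b then nu b else 0 := by
    intro nu a
    rw [mw]
    have : ∀ b : Fin n → D3, (if a ≤ b then nu b else 0)
        = (if b = a then nu b else 0) + (if a < b then nu b else 0) := by
      intro b
      by_cases hb : b = a
      · subst hb; simp [lt_irrefl]
      · by_cases hab : a ≤ b
        · rw [if_pos hab, if_neg hb, if_pos (lt_of_le_of_ne hab (Ne.symm hb))]; ring
        · rw [if_neg hab, if_neg hb, if_neg (fun h => hab h.le)]; ring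
    rw [Finset.sum_congr rfl fun b _ => this b, Finset.sum_add_distrib]
    simp
  have step : ∀ a : Fin n → D3, (∀ b, a < b → lam b = mu b) → lam a = mu a := by
    intro a hIH
    have := hM a
    rw [hsplit2 lam a, hsplit2 mu a] at this
    have heq : (∑ b : Fin n → D3, if a < b then lam b else 0)
        = ∑ b : Fin n → D3, if a < b then mu b else 0 := by
      refine Finset.sum_congr rfl fun b _ => ?_
      by_cases hb : a < b
      · simp [hb, hIH b hb]
      · simp [hb]
    linarith
  have main : ∀ k : ℕ, ∀ a : Fin n → D3, n - nz a ≤ k → lam a = mu a := by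
    intro k
    induction k with
    | zero =>
      intro a hk
      apply step
      intro b hb
      have hfull : ∀ i, a i ≠ D3.zero := by
        have hcard : nz a = n := by
          have h1 : nz a ≤ n := by
            simpa [nz] using Finset.card_filter_le Finset.univ (fun i => a i ≠ D3.zero)
          omega
        intro i
        by_contra h0
        have : (Finset.univ.filter fun i => a i ≠ D3.zero) ⊂ Finset.univ := by
          rw [Finset.ssubset_iff_of_subset (Finset.subset_univ _)]
          exact ⟨i, Finset.mem_univ i, by simp [h0]⟩
        have h2 : nz a < n := by
          have := Finset.card_lt_card this
          simpa [nz, Finset.card_univ] using this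
        omega
      exfalso
      apply hb.ne
      funext i
      exact ((hb.le i).resolve_right (hfull i))
    | succ k ih =>
      intro a hk
      apply step
      intro b hb
      apply ih
      have := nz_lt_of_lt hb
      omega
  funext a
  exact main (n - nz a) a le_rfl

end unique

section zcsq
variable {n : ℕ}

open Finset in
theorem zc_sq (α : ℝ) (hα : α ∈ Set.Ioc (0:ℝ) 1) (a b : Fin n → D3)
    (hab : ¬ a ≤ b) (hba : ¬ b ≤ a) :
    ((zc a : ℝ))^2 + ((zc b : ℝ))^2 <
      ((zc (vmeet0 a b) : ℝ))^2 + α * ((zc (vjoin0 a b) : ℝ))^2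
        + (1 - α) * ((zc (vjoin1 a b) : ℝ))^2 := by
  classical
  set z := (univ.filter fun i => a i = D3.zero ∧ b i = D3.zero).card with hz
  set p := (univ.filter fun i => a i ≠ D3.zero ∧ b i = D3.zero).card with hp
  set q := (univ.filter fun i => a i = D3.zero ∧ b i ≠ D3.zero).card with hq
  set r := (univ.filter fun i => a i ≠ D3.zero ∧ b i ≠ D3.zero ∧ a i ≠ b i).card with hr
  have hcard : ∀ (P : Fin n → Prop) [DecidablePred P],
      (univ.filter P).card = ∑ i, if P i then 1 else 0 := by
    intro P _; rw [Finset.card_filter]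
  have ea : zc a = z + q := by
    rw [zc, hz, hq, hcard, hcard, hcard, ← Finset.sum_add_distrib]
    refine Finset.sum_congr rfl fun i _ => ?_
    cases hai : a i <;> cases hbi : b i <;> simp [hai, hbi]
  have eb : zc b = z + p := by
    rw [zc, hz, hp, hcard, hcard, hcard, ← Finset.sum_add_distrib]
    refine Finset.sum_congr rfl fun i _ => ?_
    cases hai : a i <;> cases hbi : b i <;> simp [hai, hbi]
  have em : zc (vmeet0 a b) = z + p + q + r := by
    rw [zc, hz, hp, hq, hr, hcard, hcard, hcard, hcard, hcard,
      ← Finset.sum_add_distrib, ← Finset.sum_add_distrib, ← Finset.sum_add_distrib]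
    refine Finset.sum_congr rfl fun i _ => ?_
    cases hai : a i <;> cases hbi : b i <;> simp [hai, hbi, vmeet0, D3.meet0]
  have ej0 : zc (vjoin0 a b) = z + r := by
    rw [zc, hz, hr, hcard, hcard, hcard, ← Finset.sum_add_distrib]
    refine Finset.sum_congr rfl fun i _ => ?_
    cases hai : a i <;> cases hbi : b i <;> simp [hai, hbi, vjoin0, D3.join0]
  have ej1 : zc (vjoin1 a b) = z := by
    rw [zc, hz, hcard, hcard]
    refine Finset.sum_congr rfl fun i _ => ?_
    cases hai : a i <;> cases hbi : b i <;> simp [hai, hbi, vjoin1, D3.join1]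
  have hpr : 1 ≤ p + r := by
    rw [vle_iff] at hab
    push_neg at hab
    obtain ⟨i, hi1, hi2⟩ := hab
    rw [hp, hr, hcard, hcard, ← Finset.sum_add_distrib]
    calc 1 ≤ (if a i ≠ D3.zero ∧ b i = D3.zero then 1 else 0)
          + (if a i ≠ D3.zero ∧ b i ≠ D3.zero ∧ a i ≠ b i then 1 else 0) := by
          by_cases hb0 : b i = D3.zero <;> simp [hb0, hi1, hi2]
      _ ≤ _ := Finset.single_le_sum (f := fun i =>
          (if a i ≠ D3.zero ∧ b i = D3.zero then 1 else 0)
          + (if a i ≠ D3.zero ∧ b i ≠ D3.zero ∧ a i ≠ b i then 1 else 0))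
          (fun i _ => by positivity) (Finset.mem_univ i)
  have hqr : 1 ≤ q + r := by
    rw [vle_iff] at hba
    push_neg at hba
    obtain ⟨i, hi1, hi2⟩ := hba
    rw [hq, hr, hcard, hcard, ← Finset.sum_add_distrib]
    calc 1 ≤ (if a i = D3.zero ∧ b i ≠ D3.zero then 1 else 0)
          + (if a i ≠ D3.zero ∧ b i ≠ D3.zero ∧ a i ≠ b i then 1 else 0) := by
          by_cases ha0 : a i = D3.zero <;> simp [ha0, hi1, hi2, Ne.symm hi1]
      _ ≤ _ := Finset.single_le_sum (f := fun i =>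
          (if a i = D3.zero ∧ b i ≠ D3.zero then 1 else 0)
          + (if a i ≠ D3.zero ∧ b i ≠ D3.zero ∧ a i ≠ b i then 1 else 0))
          (fun i _ => by positivity) (Finset.mem_univ i)
  rw [ea, eb, em, ej0, ej1]
  push_cast
  have hz' : (0:ℝ) ≤ z := Nat.cast_nonneg z
  have hp' : (0:ℝ) ≤ p := Nat.cast_nonneg p
  have hq' : (0:ℝ) ≤ q := Nat.cast_nonneg q
  have hr' : (0:ℝ) ≤ r := Nat.cast_nonneg r
  clear hab hba
  rcases Nat.eq_zero_or_pos r with hr0 | hr1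
  · have hr0' : (r:ℝ) = 0 := by exact_mod_cast hr0
    have hp1 : (1:ℝ) ≤ p := by exact_mod_cast by omega
    have hq1 : (1:ℝ) ≤ q := by exact_mod_cast by omega
    rw [hr0']
    nlinarith [mul_nonneg hz' hp', mul_nonneg hz' hq', mul_nonneg hp' hq', hα.1, hα.2,
      mul_le_mul hp1 hq1 (by norm_num) hp']
  · have hr1' : (1:ℝ) ≤ r := by exact_mod_cast hr1
    nlinarith [mul_nonneg hz' hr', mul_nonneg hp' hq', mul_nonneg hp' hr',
      mul_nonneg hq' hr', hα.1, hα.2, mul_nonneg (mul_nonneg hz' hr') hα.1.le,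
      sq_nonneg ((r:ℝ)), mul_le_mul hr1' hr1' (by norm_num) hr']
  done

end zcsq

section exch
variable {n : ℕ}

open Finset in
theorem chain_le_dist (α : ℝ) (hα : α ∈ Set.Ioc (0:ℝ) 1) (f : (Fin n → D3) → ℝ)
    (hf : AlphaBisub α n f) (x : Fin n → ℝ)
    (lam : (Fin n → D3) → ℝ) (hl1 : IsDist n lam) (hl2 : HasMarginal α n lam x)
    (hl3 : ChainSupp n lam)
    (nu : (Fin n → D3) → ℝ) (hn1 : IsDist n nu) (hn2 : HasMarginal α n nu x) :
    ∑ a : Fin n → D3, lam a * f a ≤ ∑ a : Fin n → D3, nu a * f a := by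
  classical
  set K : Set ((Fin n → D3) → ℝ) := {μ | IsDist n μ ∧ HasMarginal α n μ x} with hK
  have hKne : K.Nonempty := ⟨nu, hn1, hn2⟩
  have hKclosed : IsClosed K := by
    have : K = (⋂ a : Fin n → D3, {μ : (Fin n → D3) → ℝ | μ a ∈ Set.Icc (0:ℝ) 1}) ∩
        ({μ : (Fin n → D3) → ℝ | ∑ a : Fin n → D3, μ a = 1} ∩
          ⋂ i : Fin n, {μ : (Fin n → D3) → ℝ |
            ∑ a : Fin n → D3, μ a * D3.emb α (a i) = x i}) := by
      ext μ
      simp only [hK, Set.mem_setOf_eq, Set.mem_inter_iff, Set.mem_iInter, Set.mem_Icc,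
        IsDist, HasMarginal]
      tauto
    rw [this]
    refine IsClosed.inter (isClosed_iInter fun a => ?_) (IsClosed.inter ?_
      (isClosed_iInter fun i => ?_))
    · exact IsClosed.preimage (continuous_apply a) isClosed_Icc
    · exact isClosed_eq (continuous_finset_sum _ fun a _ => continuous_apply a)
        continuous_const
    · exact isClosed_eq (continuous_finset_sum _ fun a _ =>
        (continuous_apply a).mul continuous_const) continuous_const
  have hKcompact : IsCompact K := by
    refine IsCompact.of_isClosed_subset
      (isCompact_univ_pi (s := fun _ : Fin n → D3 => Set.Icc (0:ℝ) 1)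
        fun _ => isCompact_Icc) hKclosed ?_
    intro μ hμ
    rw [Set.mem_univ_pi]
    exact fun a => ⟨(hμ.1.1 a).1, (hμ.1.1 a).2⟩
  -- main claim with small ε
  have main : ∀ ε : ℝ, 0 < ε →
      ∑ a : Fin n → D3, lam a * f a ≤ (∑ a : Fin n → D3, nu a * f a)
        + ε * ((∑ a : Fin n → D3, lam a * ((zc a : ℝ))^2)
          - ∑ a : Fin n → D3, nu a * ((zc a : ℝ))^2) := by
    intro ε hε
    set F : (Fin n → D3) → ℝ := fun a => f a - ε * ((zc a : ℝ))^2 with hF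
    set g : ((Fin n → D3) → ℝ) → ℝ := fun μ => ∑ a : Fin n → D3, μ a * F a with hg
    have hgcont : Continuous g :=
      continuous_finset_sum _ fun a _ => (continuous_apply a).mul continuous_const
    obtain ⟨μ, hμK, hmin⟩ := hKcompact.exists_isMinOn hKne hgcont.continuousOn
    -- the minimizer has chain support
    have hchain : ChainSupp n μ := by
      by_contra hnc
      rw [ChainSupp] at hnc
      push_neg at hnc
      obtain ⟨a, b, ha, hb, hab, hba⟩ := hnc
      have hne : a ≠ b := fun h => hab (h ▸ le_refl a)
      have hapos : 0 < μ a := lt_of_le_of_ne (hμK.1.1 a).1 (Ne.symm ha)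
      have hbpos : 0 < μ b := lt_of_le_of_ne (hμK.1.1 b).1 (Ne.symm hb)
      set ε₀ : ℝ := min (μ a) (μ b) with hε₀
      have hε₀pos : 0 < ε₀ := lt_min hapos hbpos
      set m : Fin n → D3 := vmeet0 a b with hm
      set j0 : Fin n → D3 := vjoin0 a b with hj0
      set j1 : Fin n → D3 := vjoin1 a b with hj1
      set w : (Fin n → D3) → ℝ := fun c =>
        (if c = m then (1:ℝ) else 0) + α * (if c = j0 then (1:ℝ) else 0)
          + (1 - α) * (if c = j1 then (1:ℝ) else 0)
          - (if c = a then (1:ℝ) else 0) - (if c = b then (1:ℝ) else 0) with hw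
      have hwsum : ∀ h : (Fin n → D3) → ℝ,
          ∑ c : Fin n → D3, w c * h c
            = h m + α * h j0 + (1 - α) * h j1 - h a - h b := by
        intro h
        have e1 : ∀ c : Fin n → D3, w c * h c
            = (if c = m then h c else 0) + α * (if c = j0 then h c else 0)
              + (1 - α) * (if c = j1 then h c else 0)
              - (if c = a then h c else 0) - (if c = b then h c else 0) := by
          intro c
          rw [hw]
          dsimp only
          split_ifs <;> ring
        rw [Finset.sum_congr rfl fun c _ => e1 c]
        rw [Finset.sum_sub_distrib, Finset.sum_sub_distrib, Finset.sum_add_distrib,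
          Finset.sum_add_distrib, ← Finset.mul_sum, ← Finset.mul_sum]
        simp [Finset.sum_ite_eq']
      set μ' : (Fin n → D3) → ℝ := fun c => μ c + ε₀ * w c with hμ'
      have hind : ∀ (P : Prop) [Decidable P], (0:ℝ) ≤ if P then (1:ℝ) else 0 := by
        intro P _; split <;> norm_num
      have hnn' : ∀ c, 0 ≤ μ' c := by
        intro c
        clear hab hba hmin
        rw [hμ', hw]
        dsimp only
        by_cases hca : c = a
        · subst hca
          rw [if_pos rfl, if_neg hne]
          have h1 := hind (c = m)
          have h2 := hind (c = j0)
          have h3 := hind (c = j1)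
          have h4 : ε₀ ≤ μ c := min_le_left _ _
          nlinarith [mul_nonneg hε₀pos.le h1,
            mul_nonneg hε₀pos.le (mul_nonneg hα.1.le h2),
            mul_nonneg hε₀pos.le (mul_nonneg (by linarith [hα.2] : (0:ℝ) ≤ 1 - α) h3), h4]
        · by_cases hcb : c = b
          · subst hcb
            rw [if_pos rfl, if_neg hca]
            have h1 := hind (c = m)
            have h2 := hind (c = j0)
            have h3 := hind (c = j1)
            have h4 : ε₀ ≤ μ c := min_le_right _ _
            nlinarith [mul_nonneg hε₀pos.le h1,
              mul_nonneg hε₀pos.le (mul_nonneg hα.1.le h2),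
              mul_nonneg hε₀pos.le (mul_nonneg (by linarith [hα.2] : (0:ℝ) ≤ 1 - α) h3), h4]
          · rw [if_neg hca, if_neg hcb]
            have h1 := hind (c = m)
            have h2 := hind (c = j0)
            have h3 := hind (c = j1)
            have h5 := (hμK.1.1 c).1
            nlinarith [mul_nonneg hε₀pos.le h1,
              mul_nonneg hε₀pos.le (mul_nonneg hα.1.le h2),
              mul_nonneg hε₀pos.le (mul_nonneg (by linarith [hα.2] : (0:ℝ) ≤ 1 - α) h3), h5]
      have hsum' : ∑ c : Fin n → D3, μ' c = 1 := by
        rw [hμ']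
        rw [Finset.sum_add_distrib, hμK.1.2, ← Finset.mul_sum]
        have : ∑ c : Fin n → D3, w c = 0 := by
          have := hwsum (fun _ => (1:ℝ))
          simp only [mul_one] at this
          rw [this]; ring
        rw [this]; ring
      have hμ'K : μ' ∈ K := by
        refine ⟨⟨fun c => ⟨hnn' c, ?_⟩, hsum'⟩, ?_⟩
        · calc μ' c ≤ ∑ c' : Fin n → D3, μ' c' :=
              Finset.single_le_sum (fun c' _ => hnn' c') (Finset.mem_univ c)
            _ = 1 := hsum'
        · intro i
          clear hab hba hmin
          rw [hμ']
          dsimp only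
          rw [Finset.sum_congr rfl fun c (_ : c ∈ univ) =>
            (add_mul (μ c) (ε₀ * w c) (D3.emb α (c i))),
            Finset.sum_add_distrib, hμK.2 i]
          have e2 : ∑ c : Fin n → D3, ε₀ * w c * D3.emb α (c i)
              = ε₀ * ∑ c : Fin n → D3, w c * D3.emb α (c i) := by
            rw [Finset.mul_sum]; exact Finset.sum_congr rfl fun c _ => by ring
          rw [e2, hwsum (fun c => D3.emb α (c i))]
          have := emb_key α (a i) (b i)
          have hmm : m i = D3.meet0 (a i) (b i) := rfl
          have hj0m : j0 i = D3.join0 (a i) (b i) := rfl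
          have hj1m : j1 i = D3.join1 (a i) (b i) := rfl
          rw [hmm, hj0m, hj1m]
          have h0 : D3.emb α (D3.meet0 (a i) (b i)) + α * D3.emb α (D3.join0 (a i) (b i))
              + (1 - α) * D3.emb α (D3.join1 (a i) (b i)) - D3.emb α (a i) - D3.emb α (b i)
              = 0 := by linarith [this]
          rw [h0]
          ring
      -- strict decrease
      have hdec : g μ' < g μ := by
        have e3 : g μ' = g μ + ε₀ * ∑ c : Fin n → D3, w c * F c := by
          rw [hg, hμ']
          dsimp only
          rw [Finset.sum_congr rfl fun c (_ : c ∈ univ) =>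
            (add_mul (μ c) (ε₀ * w c) (F c)), Finset.sum_add_distrib]
          have : ∑ c : Fin n → D3, ε₀ * w c * F c
              = ε₀ * ∑ c : Fin n → D3, w c * F c := by
            rw [Finset.mul_sum]; exact Finset.sum_congr rfl fun c _ => by ring
          rw [this]
        rw [e3, hwsum F]
        have hfineq : f m + α * f j0 + (1 - α) * f j1 ≤ f a + f b := hf a b
        have hzineq := zc_sq α hα a b hab hba
        clear hab hba
        have hΔ : F m + α * F j0 + (1 - α) * F j1 - F a - F b < 0 := by
          rw [hF]
          dsimp only
          have hp := mul_pos hε (by linarith [hzineq] :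
            (0:ℝ) < ((zc m : ℝ))^2 + α * ((zc j0 : ℝ))^2 + (1 - α) * ((zc j1 : ℝ))^2
              - ((zc a : ℝ))^2 - ((zc b : ℝ))^2)
          nlinarith [hp]
        have := mul_pos hε₀pos (neg_pos.2 hΔ)
        linarith
      exact absurd (hmin hμ'K) (not_le.mpr hdec)
    -- minimizer equals lam by uniqueness
    have : μ = lam :=
      (chain_dist_unique α hα.1 x lam μ hl1 hl2 hl3 hμK.1 hμK.2 hchain).symm
    subst this
    have h1 : g μ ≤ g nu := hmin ⟨hn1, hn2⟩
    rw [hg] at h1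
    dsimp only at h1
    have e4 : ∀ ρ : (Fin n → D3) → ℝ, ∑ a : Fin n → D3, ρ a * F a
        = (∑ a : Fin n → D3, ρ a * f a) - ε * ∑ a : Fin n → D3, ρ a * ((zc a : ℝ))^2 := by
      intro ρ
      rw [Finset.mul_sum, ← Finset.sum_sub_distrib]
      exact Finset.sum_congr rfl fun a _ => by rw [hF]; ring
    rw [e4, e4] at h1
    linarith
  -- let ε → 0
  refine le_of_forall_pos_le_add fun η hη => ?_
  set C : ℝ := (∑ a : Fin n → D3, lam a * ((zc a : ℝ))^2)
    - ∑ a : Fin n → D3, nu a * ((zc a : ℝ))^2 with hC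
  have hpos : 0 < |C| + 1 := by positivity
  have hεpos : 0 < η / (|C| + 1) := div_pos hη hpos
  have h1 := main (η / (|C| + 1)) hεpos
  have h2 : η / (|C| + 1) * C ≤ η := by
    rcases le_or_gt C 0 with hC0 | hC0
    · have : η / (|C| + 1) * C ≤ 0 := mul_nonpos_of_nonneg_of_nonpos hεpos.le hC0
      linarith
    · have hCle : C ≤ |C| + 1 := by
        have := le_abs_self C; linarith
      calc η / (|C| + 1) * C ≤ η / (|C| + 1) * (|C| + 1) :=
            mul_le_mul_of_nonneg_left hCle hεpos.le
        _ = η := div_mul_cancel₀ η (ne_of_gt hpos)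
    
  linarith

end exch

section finalaux
variable {n : ℕ}

lemma delta_isDist (a : Fin n → D3) : IsDist n (fun d => if d = a then (1:ℝ) else 0) := by
  classical
  refine ⟨fun d => ⟨?_, ?_⟩, ?_⟩
  · dsimp only; split <;> norm_num
  · dsimp only; split <;> norm_num
  · simp

lemma delta_marg (α : ℝ) (a : Fin n → D3) :
    HasMarginal α n (fun d => if d = a then (1:ℝ) else 0) (fun i => D3.emb α (a i)) := by
  intro i
  exact sum_ite_collapse a (fun d => D3.emb α (d i))

lemma delta_chain (a : Fin n → D3) :
    ChainSupp n (fun d => if d = a then (1:ℝ) else 0) := by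
  intro c c' hc hc'
  have h1 : c = a := by by_contra h; exact hc (if_neg h)
  have h2 : c' = a := by by_contra h; exact hc' (if_neg h)
  subst h1; subst h2
  exact Or.inl le_rfl

end finalaux
end Stmt11Aux

open Stmt11Aux in
/-- `f` is α-bisubmodular iff its Lovász extension is convex. -/
theorem stmt11 (α : ℝ) (hα : α ∈ Set.Ioc (0 : ℝ) 1) (n : ℕ) (f : (Fin n → D3) → ℝ)
    (Λ : (Fin n → ℝ) → (Fin n → D3) → ℝ)
    (hΛ : ∀ x ∈ Box α n, IsDist n (Λ x) ∧ HasMarginal α n (Λ x) x ∧ ChainSupp n (Λ x)) :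
    AlphaBisub α n f ↔ ConvexOn ℝ (Box α n) fun x => ∑ a : Fin n → D3, Λ x a * f a := by
  classical
  have hBox : Convex ℝ (Box α n) := by
    intro x hx y hy s t hs ht hst
    intro i
    have h1 := hx i
    have h2 := hy i
    rw [Set.mem_Icc] at h1 h2 ⊢
    have he : (s • x + t • y) i = s * x i + t * y i := rfl
    rw [he]
    constructor
    · nlinarith [mul_le_mul_of_nonneg_left h1.1 hs, mul_le_mul_of_nonneg_left h2.1 ht]
    · nlinarith [mul_le_mul_of_nonneg_left h1.2 hs, mul_le_mul_of_nonneg_left h2.2 ht]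
  constructor
  · -- bisubmodular → convex
    intro hf
    refine ⟨hBox, ?_⟩
    intro x hx y hy s t hs ht hst
    have hz : s • x + t • y ∈ Box α n := hBox hx hy hs ht hst
    obtain ⟨hzd, hzm, hzc⟩ := hΛ _ hz
    obtain ⟨hxd, hxm, hxc⟩ := hΛ x hx
    obtain ⟨hyd, hym, hyc⟩ := hΛ y hy
    set ν : (Fin n → D3) → ℝ := fun c => s * Λ x c + t * Λ y c with hν
    have hν1 : IsDist n ν := by
      have hsum : ∑ c : Fin n → D3, ν c = 1 := by
        rw [hν]
        rw [Finset.sum_add_distrib, ← Finset.mul_sum, ← Finset.mul_sum, hxd.2, hyd.2]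
        linarith
      have hnn : ∀ c, 0 ≤ ν c := fun c =>
        add_nonneg (mul_nonneg hs (hxd.1 c).1) (mul_nonneg ht (hyd.1 c).1)
      refine ⟨fun c => ⟨hnn c, ?_⟩, hsum⟩
      calc ν c ≤ ∑ c' : Fin n → D3, ν c' :=
            Finset.single_le_sum (fun c' _ => hnn c') (Finset.mem_univ c)
        _ = 1 := hsum
    have hν2 : HasMarginal α n ν (s • x + t • y) := by
      intro i
      have e1 : ∀ c : Fin n → D3, ν c * D3.emb α (c i)
          = s * (Λ x c * D3.emb α (c i)) + t * (Λ y c * D3.emb α (c i)) := by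
        intro c; rw [hν]; ring
      rw [Finset.sum_congr rfl fun c _ => e1 c, Finset.sum_add_distrib,
        ← Finset.mul_sum, ← Finset.mul_sum, hxm i, hym i]
      rfl
    have hmain := chain_le_dist α hα f hf (s • x + t • y) (Λ (s • x + t • y))
      hzd hzm hzc ν hν1 hν2
    have e2 : ∑ c : Fin n → D3, ν c * f c
        = s * (∑ c : Fin n → D3, Λ x c * f c) + t * (∑ c : Fin n → D3, Λ y c * f c) := by
      have e1 : ∀ c : Fin n → D3, ν c * f c
          = s * (Λ x c * f c) + t * (Λ y c * f c) := by
        intro c; rw [hν]; ring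
      rw [Finset.sum_congr rfl fun c _ => e1 c, Finset.sum_add_distrib,
        ← Finset.mul_sum, ← Finset.mul_sum]
    simp only [smul_eq_mul]
    rw [e2] at hmain
    exact hmain
  · -- convex → bisubmodular
    intro hconv a b
    set xa : Fin n → ℝ := fun i => D3.emb α (a i) with hxa
    set xb : Fin n → ℝ := fun i => D3.emb α (b i) with hxb
    have hmem : ∀ c : Fin n → D3, (fun i => D3.emb α (c i)) ∈ Box α n := by
      intro c i
      rw [Set.mem_Icc]
      cases h : c i <;>
        simp only [h, D3.emb] <;> constructor <;> linarith [hα.1, hα.2]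
    have hxaB : xa ∈ Box α n := hmem a
    have hxbB : xb ∈ Box α n := hmem b
    set z : Fin n → ℝ := (1/2 : ℝ) • xa + (1/2 : ℝ) • xb with hzdef
    have hzB : z ∈ Box α n := hBox hxaB hxbB (by norm_num) (by norm_num) (by norm_num)
    set m : Fin n → D3 := vmeet0 a b with hm
    set j0 : Fin n → D3 := vjoin0 a b with hj0
    set j1 : Fin n → D3 := vjoin1 a b with hj1
    set ν : (Fin n → D3) → ℝ := fun c =>
      (1/2 : ℝ) * (if c = m then (1:ℝ) else 0) + (α/2) * (if c = j0 then (1:ℝ) else 0)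
        + ((1-α)/2) * (if c = j1 then (1:ℝ) else 0) with hν
    have hcol : ∀ h : (Fin n → D3) → ℝ, ∑ c : Fin n → D3, ν c * h c
        = (1/2) * h m + (α/2) * h j0 + ((1-α)/2) * h j1 := by
      intro h
      have e1 : ∀ c : Fin n → D3, ν c * h c
          = (1/2) * ((if c = m then (1:ℝ) else 0) * h c)
            + (α/2) * ((if c = j0 then (1:ℝ) else 0) * h c)
            + ((1-α)/2) * ((if c = j1 then (1:ℝ) else 0) * h c) := by
        intro c; rw [hν]; ring
      rw [Finset.sum_congr rfl fun c _ => e1 c, Finset.sum_add_distrib,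
        Finset.sum_add_distrib, ← Finset.mul_sum, ← Finset.mul_sum, ← Finset.mul_sum,
        sum_ite_collapse, sum_ite_collapse, sum_ite_collapse]
    have hind : ∀ (P : Prop) [Decidable P], (0:ℝ) ≤ if P then (1:ℝ) else 0 := by
      intro P _; split <;> norm_num
    have hνsum : ∑ c : Fin n → D3, ν c = 1 := by
      have := hcol (fun _ => (1:ℝ))
      simp only [mul_one] at this
      rw [this]; ring
    have hνnn : ∀ c, 0 ≤ ν c := by
      intro c
      rw [hν]
      have i1 := hind (c = m)
      have i2 := hind (c = j0)
      have i3 := hind (c = j1)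
      dsimp only
      exact add_nonneg (add_nonneg (mul_nonneg (by norm_num) i1)
        (mul_nonneg (by linarith [hα.1] : (0:ℝ) ≤ α/2) i2))
        (mul_nonneg (by linarith [hα.2] : (0:ℝ) ≤ (1-α)/2) i3)
    have hν1 : IsDist n ν := by
      refine ⟨fun c => ⟨hνnn c, ?_⟩, hνsum⟩
      calc ν c ≤ ∑ c' : Fin n → D3, ν c' :=
            Finset.single_le_sum (fun c' _ => hνnn c') (Finset.mem_univ c)
        _ = 1 := hνsum
    have hν2 : HasMarginal α n ν z := by
      intro i
      rw [hcol (fun c => D3.emb α (c i))]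
      have hzi : z i = (1/2) * D3.emb α (a i) + (1/2) * D3.emb α (b i) := rfl
      rw [hzi]
      have hkey := emb_key α (a i) (b i)
      have hmm : m i = D3.meet0 (a i) (b i) := rfl
      have hj0m : j0 i = D3.join0 (a i) (b i) := rfl
      have hj1m : j1 i = D3.join1 (a i) (b i) := rfl
      rw [hmm, hj0m, hj1m]
      linarith
    have hν3 : ChainSupp n ν := by
      have hmem3 : ∀ c, ν c ≠ 0 → c = m ∨ c = j0 ∨ c = j1 := by
        intro c hc
        by_contra h
        push_neg at h
        apply hc
        rw [hν]
        simp [h.1, h.2.1, h.2.2]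
      have o1 : m ≤ j0 := meet0_le_join0 a b
      have o2 : j0 ≤ j1 := join0_le_join1 a b
      intro c c' hc hc'
      rcases hmem3 c hc with rfl | rfl | rfl <;> rcases hmem3 c' hc' with rfl | rfl | rfl <;>
        first
          | exact Or.inl le_rfl
          | exact Or.inl o1
          | exact Or.inl o2
          | exact Or.inl (le_trans o1 o2)
          | exact Or.inr o1
          | exact Or.inr o2
          | exact Or.inr (le_trans o1 o2)
    -- identify Λ at the three points
    obtain ⟨hzd, hzm, hzc⟩ := hΛ z hzB
    obtain ⟨had, ham, hac⟩ := hΛ xa hxaB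
    obtain ⟨hbd, hbm, hbc⟩ := hΛ xb hxbB
    have hΛa : Λ xa = fun d => if d = a then (1:ℝ) else 0 :=
      chain_dist_unique α hα.1 xa _ _ had ham hac (delta_isDist a) (delta_marg α a)
        (delta_chain a)
    have hΛb : Λ xb = fun d => if d = b then (1:ℝ) else 0 :=
      chain_dist_unique α hα.1 xb _ _ hbd hbm hbc (delta_isDist b) (delta_marg α b)
        (delta_chain b)
    have hΛz : Λ z = ν := chain_dist_unique α hα.1 z _ _ hzd hzm hzc hν1 hν2 hν3
    have hiq := hconv.2 hxaB hxbB (by norm_num : (0:ℝ) ≤ 1/2) (by norm_num : (0:ℝ) ≤ 1/2)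
      (by norm_num : (1/2 : ℝ) + 1/2 = 1)
    simp only [smul_eq_mul] at hiq
    rw [← hzdef] at hiq
    rw [hΛz, hΛa, hΛb, hcol f] at hiq
    rw [sum_ite_collapse a f, sum_ite_collapse b f] at hiq
    rw [hm, hj0, hj1] at hiq
    linarith
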